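/- Let X be a set with a family 𝓑 = ⋃ₙ 𝓑ₙ of nonempty open subsets of a topological space X such that each 𝓑ₙ is pairwise disjoint and 𝓑 is a π-base, and suppose every point of a dense set D ⊆ X has countable character. Then X has cellularity at least |𝓑ₙ| for each n; consequently, if |𝓑| ≥ κ for an uncountable cardinal κ of uncountable cofinality, then X has a cellular family of size κ. -/
import Mathlib


/-- A π-base for `X`: a family of nonempty open sets such that every nonempty open set
contains a member of the family. -/
def IsPiBase (X : Type*) [TopologicalSpace X] (𝓟 : Set (Set X)) : Prop :=
  (∀ P ∈ 𝓟, IsOpen P ∧ P.Nonempty) ∧ ∀ U : Set X, IsOpen U → U.Nonempty → ∃ P ∈ 𝓟, P ⊆ U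

/-- The π-weight of `X`: the least cardinality of a π-base. -/
noncomputable def piWeight (X : Type*) [TopologicalSpace X] : Cardinal :=
  sInf {c | ∃ 𝓟 : Set (Set X), IsPiBase X 𝓟 ∧ c = Cardinal.mk 𝓟}

/-- A cellular family: a pairwise disjoint family of nonempty open sets. -/
def IsCellular {X : Type*} [TopologicalSpace X] (𝓤 : Set (Set X)) : Prop :=
  (∀ U ∈ 𝓤, IsOpen U ∧ U.Nonempty) ∧ 𝓤.PairwiseDisjoint id

/-- The cellularity of `X`: the supremum of the cardinalities of cellular families. -/
noncomputable def cellularity (X : Type*) [TopologicalSpace X] : Cardinal :=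
  ⨆ 𝓤 : {𝓤 : Set (Set X) // IsCellular 𝓤}, Cardinal.mk 𝓤.1

/-- If `X` has a σ-disjoint π-base `𝓑 = ⋃ₙ 𝓑ₙ` and a dense set of points of countable
character, then the cellularity of `X` is at least `|𝓑ₙ|` for each `n`; consequently, if
`|𝓑| ≥ κ` for an uncountable cardinal `κ` of uncountable cofinality, then `X` has a cellular
family of size `κ`. -/
theorem stmt18 {X : Type u} [TopologicalSpace X] (𝓑 : ℕ → Set (Set X))
    (hpb : IsPiBase X (⋃ n, 𝓑 n)) (hdisj : ∀ n, (𝓑 n).PairwiseDisjoint id)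
    (D : Set X) (hD : Dense D) (hchar : ∀ x ∈ D, (nhds x).IsCountablyGenerated) :
    (∀ n, Cardinal.mk (𝓑 n) ≤ cellularity X) ∧
    ∀ κ : Cardinal.{u}, Cardinal.aleph0 < κ → Cardinal.aleph0 < κ.ord.cof →
      κ ≤ Cardinal.mk (⋃ n, 𝓑 n) → ∃ 𝓤 : Set (Set X), IsCellular 𝓤 ∧ Cardinal.mk 𝓤 = κ := by
  have hcell : ∀ n, IsCellular (𝓑 n) := fun n =>
    ⟨fun U hU => hpb.1 U (Set.mem_iUnion.2 ⟨n, hU⟩), hdisj n⟩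
  constructor
  · intro n
    exact le_ciSup (Cardinal.bddAbove_range _) (⟨𝓑 n, hcell n⟩ : {𝓤 : Set (Set X) // IsCellular 𝓤})
  · intro κ hκ hcof hle
    have hex : ∃ n, κ ≤ Cardinal.mk (𝓑 n) := by
      by_contra h
      push_neg at h
      have hsup : (⨆ n, Cardinal.mk (𝓑 n)) < κ := Ordinal.iSup_lt_lift (by simpa using hcof) h
      have h1 : Cardinal.mk (⋃ n, 𝓑 n) ≤ Cardinal.lift.{u} (Cardinal.mk ℕ) * ⨆ n, Cardinal.mk (𝓑 n) := by
        simpa using Cardinal.mk_iUnion_le_lift 𝓑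
      have h2 : Cardinal.lift.{u} (Cardinal.mk ℕ) * (⨆ n, Cardinal.mk (𝓑 n)) < κ :=
        Cardinal.mul_lt_of_lt hκ.le (by simpa using hκ) hsup
      exact absurd (hle.trans h1) (not_le.mpr h2)
    obtain ⟨n, hn⟩ := hex
    obtain ⟨S, hSsub, hS⟩ := Cardinal.le_mk_iff_exists_subset.mp hn
    refine ⟨S, ⟨fun U hU => (hcell n).1 U (hSsub hU), (hcell n).2.subset hSsub⟩, hS⟩
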